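/- For coprime positive integers a < b and any real X > 2, the tail sum satisfies \sum_{n > X} g_{a,b}(n)^2 = O(X^{-a/((a+b)b)}). -/

import Mathlib

open Finset

noncomputable def g (a b n : ℕ) : ℝ :=
  ∑ p ∈ (Finset.Icc 1 n ×ˢ Finset.Icc 1 n).filter (fun p => p.1 ^ a * p.2 ^ b = n),
    (p.1 : ℝ) ^ (-(((a : ℝ) + 2 * b) / (2 * a + 2 * b))) *
      (p.2 : ℝ) ^ (-((2 * (a : ℝ) + b) / (2 * a + 2 * b)))



lemma bern {δ x : ℝ} (hδ0 : 0 < δ) (hδ1 : δ ≤ 1) (hx : 1 ≤ x) :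
    (x + 1) ^ (-(1 + δ)) ≤ (1 / δ) * (x ^ (-δ) - (x + 1) ^ (-δ)) := by
  have hx0 : 0 < x := by linarith
  have hx1 : 0 < x + 1 := by linarith
  set ρ := (x / (x + 1)) ^ δ with hρdef
  have hratio : 0 < x / (x + 1) := by positivity
  have hρ0 : 0 < ρ := Real.rpow_pos_of_pos hratio δ
  have hρpow : ρ ^ (1 / δ) = x / (x + 1) := by
    rw [hρdef, ← Real.rpow_mul hratio.le, mul_one_div_cancel hδ0.ne', Real.rpow_one]
  have hbern := one_add_mul_self_le_rpow_one_add (s := ρ - 1) (by linarith)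
    (p := 1 / δ) (by rw [le_div_iff₀ hδ0]; linarith)
  rw [show (1 : ℝ) + (ρ - 1) = ρ by ring, hρpow] at hbern
  -- hbern : 1 + (1/δ) * (ρ - 1) ≤ x / (x+1)
  have e1 : x / (x + 1) - 1 = -(1 / (x + 1)) := by field_simp; ring
  have h2 : (1 / δ) * (ρ - 1) ≤ -(1 / (x + 1)) := by linarith
  have h3 : ρ - 1 ≤ δ * -(1 / (x + 1)) := by
    have h4 := mul_le_mul_of_nonneg_left h2 hδ0.le
    rwa [← mul_assoc, mul_one_div_cancel hδ0.ne', one_mul] at h4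
  have hmain : (1 + δ * (x + 1)⁻¹) * ρ ≤ 1 := by
    have hq0 : 0 ≤ δ * (x + 1)⁻¹ := by positivity
    have h5 : ρ ≤ 1 - δ * (x + 1)⁻¹ := by
      rw [one_div] at h3; linarith
    nlinarith [mul_le_mul_of_nonneg_left h5 (by linarith : (0:ℝ) ≤ 1 + δ * (x + 1)⁻¹)]
  have hP : 0 < (x + 1) ^ (-δ) := Real.rpow_pos_of_pos hx1 _
  have e2 : (x + 1) ^ (-(1 + δ)) = (x + 1) ^ (-δ) * (x + 1)⁻¹ := by
    rw [show -(1 + δ) = -δ + -1 by ring, Real.rpow_add hx1, Real.rpow_neg_one]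
  have e3 : x ^ (-δ) = (x + 1) ^ (-δ) / ρ := by
    have hxδ : (0:ℝ) < x ^ δ := Real.rpow_pos_of_pos hx0 δ
    have hx1δ : (0:ℝ) < (x + 1) ^ δ := Real.rpow_pos_of_pos hx1 δ
    rw [hρdef, Real.div_rpow hx0.le hx1.le, Real.rpow_neg hx0.le, Real.rpow_neg hx1.le]
    field_simp
  rw [e2, e3]
  rw [show (1 / δ) * ((x + 1) ^ (-δ) / ρ - (x + 1) ^ (-δ))
      = ((x + 1) ^ (-δ) / ρ - (x + 1) ^ (-δ)) / δ by ring, le_div_iff₀ hδ0, le_sub_iff_add_le]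
  rw [le_div_iff₀ hρ0]
  nlinarith [mul_le_mul_of_nonneg_left hmain hP.le]

lemma telesc {δ : ℝ} (hδ0 : 0 < δ) (hδ1 : δ ≤ 1) (m N : ℕ) (hm : 1 ≤ m) :
    ∑ r ∈ Icc (m + 1) N, (r : ℝ) ^ (-(1 + δ)) ≤ (1 / δ) * (m : ℝ) ^ (-δ) := by
  have key : ∑ r ∈ Icc (m + 1) N, (r : ℝ) ^ (-(1 + δ))
      ≤ ∑ r ∈ Icc (m + 1) N, (1 / δ) * (((r - 1 : ℕ) : ℝ) ^ (-δ) - (r : ℝ) ^ (-δ)) := by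
    refine Finset.sum_le_sum fun r hr => ?_
    simp only [Finset.mem_Icc] at hr
    have hr1 : m + 1 ≤ r := hr.1
    have hcast : ((r : ℕ) : ℝ) = ((r - 1 : ℕ) : ℝ) + 1 := by
      have : (1:ℕ) ≤ r := by omega
      push_cast [Nat.cast_sub this]; ring
    rw [hcast]
    exact bern hδ0 hδ1 (by
      have : (m:ℝ) ≤ ((r - 1 : ℕ) : ℝ) := by exact_mod_cast (by omega : m ≤ r - 1)
      have hm' : (1:ℝ) ≤ (m:ℝ) := by exact_mod_cast hm
      linarith)
  refine key.trans ?_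
  rw [← Finset.mul_sum]
  refine mul_le_mul_of_nonneg_left ?_ (by positivity)
  rw [show Icc (m+1) N = Ico (m+1) (N+1) by rw [Finset.Ico_add_one_right_eq_Icc]]
  rw [Finset.sum_Ico_eq_sum_range]
  have : ∀ k, ((m + 1 + k - 1 : ℕ) : ℝ) = ((m + k : ℕ) : ℝ) := by
    intro k; congr 1; omega
  calc ∑ k ∈ range (N + 1 - (m + 1)), (((m + 1 + k - 1 : ℕ) : ℝ) ^ (-δ) - ((m + 1 + k : ℕ) : ℝ) ^ (-δ))
      = ∑ k ∈ range (N + 1 - (m + 1)), ((((m + k : ℕ) : ℝ)) ^ (-δ) - (((m + (k+1) : ℕ) : ℝ)) ^ (-δ)) := by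
        refine Finset.sum_congr rfl fun k _ => ?_
        rw [this k, show m + 1 + k = m + (k + 1) by omega]
    _ = ((m + 0 : ℕ) : ℝ) ^ (-δ) - ((m + (N + 1 - (m + 1)) : ℕ) : ℝ) ^ (-δ) :=
        Finset.sum_range_sub' (fun i => ((m + i : ℕ) : ℝ) ^ (-δ)) _
    _ ≤ (m : ℝ) ^ (-δ) := by
        simp only [Nat.add_zero]
        have : (0:ℝ) ≤ ((m + (N + 1 - (m + 1)) : ℕ) : ℝ) ^ (-δ) := Real.rpow_nonneg (by positivity) _
        linarith

lemma L1 {δ : ℝ} (hδ0 : 0 < δ) (hδ1 : δ ≤ 1) {W : ℝ} (hW : 0 ≤ W) (F : Finset ℕ) :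
    ∑ r ∈ F, (if 1 ≤ r ∧ W < (r : ℝ) then (r : ℝ) ^ (-(1 + δ)) else 0)
      ≤ (1 + 2 / δ) * (max 1 W) ^ (-δ) := by
  classical
  set N := F.sup id with hN
  set G := F.filter (fun r : ℕ => 1 ≤ r ∧ W < (r : ℝ)) with hG
  have hsub : ∀ r ∈ G, r ≤ N := fun r hr => le_sup (f := id) (Finset.mem_of_mem_filter r hr)
  rw [← Finset.sum_filter, ← hG]
  rcases le_or_gt 1 W with hW1 | hW1
  · -- 1 ≤ W
    set m := ⌊W⌋₊ with hm
    have hm1 : 1 ≤ m := Nat.le_floor (by exact_mod_cast hW1)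
    have hmW : (m : ℝ) ≤ W := Nat.floor_le hW
    have hsub2 : G ⊆ Icc (m + 1) N := by
      intro r hr
      have hc := (Finset.mem_filter.mp hr).2
      simp only [Finset.mem_Icc]
      refine ⟨?_, hsub r hr⟩
      have h5 : (m : ℝ) < (r : ℝ) := lt_of_le_of_lt hmW hc.2
      exact_mod_cast Nat.succ_le_of_lt (by exact_mod_cast h5)
    have hmax : max 1 W = W := max_eq_right hW1
    have hWpos : (0:ℝ) < W := by linarith
    have hmpos : (0:ℝ) < (m:ℝ) := by exact_mod_cast hm1
    have hm2 : W / 2 ≤ (m : ℝ) := by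
      rcases le_or_gt 2 W with h2 | h2
      · nlinarith [Nat.sub_one_lt_floor W]
      · have hm1' : (1:ℝ) ≤ (m:ℝ) := by exact_mod_cast hm1
        linarith
    have key : (m : ℝ) ^ (-δ) ≤ 2 * W ^ (-δ) := by
      have h1 : (m:ℝ) ^ (-δ) ≤ (W / 2) ^ (-δ) :=
        Real.rpow_le_rpow_of_nonpos (by linarith) hm2 (by linarith)
      have h2 : (W / 2) ^ (-δ) = W ^ (-δ) * 2 ^ δ := by
        rw [Real.div_rpow hWpos.le (by norm_num), Real.rpow_neg (by norm_num : (0:ℝ) ≤ 2)]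
        field_simp
      have h3 : (2:ℝ) ^ δ ≤ 2 := by
        calc (2:ℝ) ^ δ ≤ (2:ℝ) ^ (1:ℝ) := Real.rpow_le_rpow_of_exponent_le (by norm_num) hδ1
          _ = 2 := Real.rpow_one 2
      have h4 : (0:ℝ) ≤ W ^ (-δ) := Real.rpow_nonneg hWpos.le _
      calc (m:ℝ) ^ (-δ) ≤ W ^ (-δ) * 2 ^ δ := by rw [← h2]; exact h1
        _ ≤ W ^ (-δ) * 2 := mul_le_mul_of_nonneg_left h3 h4
        _ = 2 * W ^ (-δ) := by ring
    have hWδ : (0:ℝ) ≤ W ^ (-δ) := Real.rpow_nonneg hWpos.le _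
    calc ∑ r ∈ G, (r : ℝ) ^ (-(1 + δ))
        ≤ ∑ r ∈ Icc (m + 1) N, (r : ℝ) ^ (-(1 + δ)) :=
          Finset.sum_le_sum_of_subset_of_nonneg hsub2
            (fun i _ _ => Real.rpow_nonneg (by positivity) _)
      _ ≤ (1 / δ) * (m : ℝ) ^ (-δ) := telesc hδ0 hδ1 m N hm1
      _ ≤ (1 / δ) * (2 * W ^ (-δ)) := mul_le_mul_of_nonneg_left key (by positivity)
      _ = (2 / δ) * W ^ (-δ) := by ring
      _ ≤ (1 + 2 / δ) * W ^ (-δ) := mul_le_mul_of_nonneg_right (by linarith) hWδ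
      _ = (1 + 2 / δ) * (max 1 W) ^ (-δ) := by rw [hmax]
  · -- W < 1
    have hmax : max 1 W = 1 := max_eq_left hW1.le
    rw [hmax, Real.one_rpow, mul_one]
    have hsub2 : G ⊆ insert 1 (Icc 2 N) := by
      intro r hr
      have hc := (Finset.mem_filter.mp hr).2
      rcases eq_or_lt_of_le hc.1 with h1 | h1
      · rw [← h1]; exact Finset.mem_insert_self 1 _
      · exact Finset.mem_insert_of_mem (by simp only [Finset.mem_Icc]; exact ⟨h1, hsub r hr⟩)
    have hdiv : (1:ℝ) / δ ≤ 2 / δ := by gcongr; norm_num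
    calc ∑ r ∈ G, (r : ℝ) ^ (-(1 + δ))
        ≤ ∑ r ∈ insert 1 (Icc 2 N), (r : ℝ) ^ (-(1 + δ)) :=
          Finset.sum_le_sum_of_subset_of_nonneg hsub2
            (fun i _ _ => Real.rpow_nonneg (by positivity) _)
      _ = ((1:ℕ) : ℝ) ^ (-(1 + δ)) + ∑ r ∈ Icc 2 N, (r : ℝ) ^ (-(1 + δ)) :=
          Finset.sum_insert (by simp)
      _ ≤ 1 + (1 / δ) * 1 := by
          have ht := telesc hδ0 hδ1 1 N le_rfl
          simp only [Nat.cast_one, Real.one_rpow] at ht ⊢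
          linarith
      _ ≤ 1 + 2 / δ := by linarith


lemma powlem {a b : ℕ} (ha : 0 < a) (hb : 0 < b) (hcop : Nat.Coprime a b)
    {x z : ℕ} (hx : 0 < x) (heq : x ^ a = z ^ b) : ∃ c, x = c ^ b ∧ z = c ^ a := by
  have hz : 0 < z := by
    rcases Nat.eq_zero_or_pos z with rfl | hz
    · rw [zero_pow hb.ne'] at heq; exact absurd heq (pow_pos hx a).ne'
    · exact hz
  rcases eq_or_lt_of_le (show 1 ≤ b from hb) with hb1 | hb2
  · refine ⟨x, by rw [← hb1, pow_one], ?_⟩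
    rw [← hb1, pow_one] at heq; omega
  · obtain ⟨s, -, hs⟩ := Nat.exists_mul_mod_eq_one_of_coprime hcop hb2
    have hs0 : s ≠ 0 := by
      intro h; subst h; simp at hs
    obtain ⟨t, hts⟩ : ∃ t, a * s = b * t + 1 :=
      ⟨a * s / b, by have h1 := Nat.div_add_mod (a * s) b; omega⟩
    have hdvd : x ^ t ∣ z ^ s := by
      rw [← Nat.pow_dvd_pow_iff hb.ne']
      calc (x ^ t) ^ b = x ^ (t * b) := (pow_mul x t b).symm
        _ ∣ x ^ (a * s) := pow_dvd_pow x (by rw [mul_comm t b]; omega)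
        _ = (x ^ a) ^ s := pow_mul x a s
        _ = (z ^ b) ^ s := by rw [heq]
        _ = z ^ (b * s) := (pow_mul z b s).symm
        _ = (z ^ s) ^ b := by rw [mul_comm b s, pow_mul]
    obtain ⟨c, hc⟩ := hdvd
    have hxc : x = c ^ b := by
      have h1 : x ^ (b * t) * x = x ^ (b * t) * c ^ b := by
        calc x ^ (b * t) * x = x ^ (b * t + 1) := (pow_succ x (b * t)).symm
          _ = x ^ (a * s) := by rw [hts]
          _ = (x ^ a) ^ s := pow_mul x a s
          _ = (z ^ b) ^ s := by rw [heq]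
          _ = z ^ (b * s) := (pow_mul z b s).symm
          _ = (z ^ s) ^ b := by rw [mul_comm b s, pow_mul]
          _ = (x ^ t * c) ^ b := by rw [hc]
          _ = x ^ (t * b) * c ^ b := by rw [mul_pow, pow_mul]
          _ = x ^ (b * t) * c ^ b := by rw [mul_comm t b]
      exact Nat.eq_of_mul_eq_mul_left (pow_pos hx _) h1
    have hfin : z ^ s = (c ^ a) ^ s := by
      calc z ^ s = x ^ t * c := hc
        _ = (c ^ b) ^ t * c := by rw [hxc]
        _ = c ^ (b * t) * c := by rw [← pow_mul]
        _ = c ^ (b * t + 1) := (pow_succ c (b * t)).symm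
        _ = c ^ (a * s) := by rw [hts]
        _ = (c ^ a) ^ s := pow_mul c a s
    exact ⟨c, hxc, Nat.pow_left_injective hs0 hfin⟩

lemma decomp {a b : ℕ} (ha : 0 < a) (hb : 0 < b) (hcop : Nat.Coprime a b)
    {h r h' r' : ℕ} (hh : 0 < h) (hr : 0 < r) (hh' : 0 < h') (hr' : 0 < r')
    (heq : h ^ a * r ^ b = h' ^ a * r' ^ b) :
    ∃ u v h₁ r₁ : ℕ, 0 < u ∧ 0 < v ∧ 0 < h₁ ∧ 0 < r₁ ∧
      h = v ^ b * h₁ ∧ r = u ^ a * r₁ ∧ h' = u ^ b * h₁ ∧ r' = v ^ a * r₁ := by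
  obtain ⟨x, hx⟩ := Nat.gcd_dvd_left h h'
  obtain ⟨y, hy⟩ := Nat.gcd_dvd_right h h'
  obtain ⟨w, hw⟩ := Nat.gcd_dvd_left r r'
  obtain ⟨z, hz⟩ := Nat.gcd_dvd_right r r'
  set d1 := Nat.gcd h h' with hd1
  set d2 := Nat.gcd r r' with hd2
  have hd1p : 0 < d1 := Nat.gcd_pos_of_pos_left _ hh
  have hd2p : 0 < d2 := Nat.gcd_pos_of_pos_left _ hr
  have hxp : 0 < x := by rcases Nat.eq_zero_or_pos x with rfl | h0; · omega
                         · exact h0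
  have hyp : 0 < y := by rcases Nat.eq_zero_or_pos y with rfl | h0; · omega
                         · exact h0
  have hwp : 0 < w := by rcases Nat.eq_zero_or_pos w with rfl | h0; · omega
                         · exact h0
  have hzp : 0 < z := by rcases Nat.eq_zero_or_pos z with rfl | h0; · omega
                         · exact h0
  have cxy : Nat.Coprime x y := by
    have e1 : x = h / d1 := by rw [hx, Nat.mul_div_cancel_left _ hd1p]
    have e2 : y = h' / d1 := by rw [hy, Nat.mul_div_cancel_left _ hd1p]
    rw [e1, e2]; exact Nat.coprime_div_gcd_div_gcd hd1p
  have cwz : Nat.Coprime w z := by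
    have e1 : w = r / d2 := by rw [hw, Nat.mul_div_cancel_left _ hd2p]
    have e2 : z = r' / d2 := by rw [hz, Nat.mul_div_cancel_left _ hd2p]
    rw [e1, e2]; exact Nat.coprime_div_gcd_div_gcd hd2p
  have key : x ^ a * w ^ b = y ^ a * z ^ b := by
    refine Nat.eq_of_mul_eq_mul_left (show 0 < d1 ^ a * d2 ^ b by positivity) ?_
    calc d1 ^ a * d2 ^ b * (x ^ a * w ^ b) = (d1 * x) ^ a * (d2 * w) ^ b := by ring
      _ = (d1 * y) ^ a * (d2 * z) ^ b := by rw [← hx, ← hw, ← hy, ← hz]; exact heq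
      _ = d1 ^ a * d2 ^ b * (y ^ a * z ^ b) := by ring
  have h1 : x ^ a ∣ z ^ b :=
    (cxy.pow a a).dvd_of_dvd_mul_left ⟨w ^ b, by rw [← key]⟩
  have h2 : z ^ b ∣ x ^ a :=
    (cwz.symm.pow b b).dvd_of_dvd_mul_left ⟨y ^ a, by rw [mul_comm (w^b) (x^a), key]; ring⟩
  have hxz : x ^ a = z ^ b := Nat.dvd_antisymm h1 h2
  have h3 : y ^ a ∣ w ^ b :=
    (cxy.symm.pow a a).dvd_of_dvd_mul_left ⟨z ^ b, key⟩
  have h4 : w ^ b ∣ y ^ a :=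
    (cwz.pow b b).dvd_of_dvd_mul_left ⟨x ^ a, by rw [mul_comm (z^b) (y^a), ← key]; ring⟩
  have hyw : y ^ a = w ^ b := Nat.dvd_antisymm h3 h4
  obtain ⟨v, hv1, hv2⟩ := powlem ha hb hcop hxp hxz
  obtain ⟨u, hu1, hu2⟩ := powlem ha hb hcop hyp hyw
  have hup : 0 < u := by
    rcases Nat.eq_zero_or_pos u with rfl | h0
    · rw [zero_pow hb.ne'] at hu1; omega
    · exact h0
  have hvp : 0 < v := by
    rcases Nat.eq_zero_or_pos v with rfl | h0
    · rw [zero_pow hb.ne'] at hv1; omega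
    · exact h0
  exact ⟨u, v, d1, d2, hup, hvp, hd1p, hd2p,
    by rw [hx, hv1]; ring, by rw [hw, hu2]; ring, by rw [hy, hu1]; ring, by rw [hz, hv2]; ring⟩


noncomputable def sigR (a b : ℕ) : ℝ := ((a:ℝ)^2 + a*b + b^2) / ((a:ℝ) + b)

noncomputable def tt (a b : ℕ) (p : ℕ × ℕ) : ℝ :=
  (p.1 : ℝ) ^ (-(((a : ℝ) + 2 * b) / (2 * a + 2 * b))) *
    (p.2 : ℝ) ^ (-((2 * (a : ℝ) + b) / (2 * a + 2 * b)))

lemma value_lemma {a b : ℕ} (ha : 0 < a) (hb : 0 < b) {u v h r : ℕ}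
    (hu : 0 < u) (hv : 0 < v) (hh : 0 < h) (hr : 0 < r) :
    tt a b (v ^ b * h, u ^ a * r) * tt a b (u ^ b * h, v ^ a * r)
      = (u : ℝ) ^ (-(sigR a b)) * (v : ℝ) ^ (-(sigR a b)) *
        ((h : ℝ) ^ (-(1 + (b:ℝ)/((a:ℝ)+b))) * (r : ℝ) ^ (-(1 + (a:ℝ)/((a:ℝ)+b)))) := by
  have ha' : (0:ℝ) < a := by exact_mod_cast ha
  have hb' : (0:ℝ) < b := by exact_mod_cast hb
  have hu' : (0:ℝ) < u := by exact_mod_cast hu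
  have hv' : (0:ℝ) < v := by exact_mod_cast hv
  have hh' : (0:ℝ) < h := by exact_mod_cast hh
  have hr' : (0:ℝ) < r := by exact_mod_cast hr
  set A : ℝ := ((a : ℝ) + 2 * b) / (2 * a + 2 * b) with hA
  set B : ℝ := (2 * (a : ℝ) + b) / (2 * a + 2 * b) with hB
  rw [tt, tt]
  dsimp only
  push_cast
  rw [Real.mul_rpow (by positivity) hh'.le, Real.mul_rpow (by positivity) hr'.le,
    Real.mul_rpow (by positivity) hh'.le, Real.mul_rpow (by positivity) hr'.le,
    ← Real.rpow_natCast (v:ℝ) b, ← Real.rpow_natCast (u:ℝ) a,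
    ← Real.rpow_natCast (u:ℝ) b, ← Real.rpow_natCast (v:ℝ) a,
    ← Real.rpow_mul hv'.le, ← Real.rpow_mul hu'.le,
    ← Real.rpow_mul hu'.le, ← Real.rpow_mul hv'.le]
  rw [show (v:ℝ) ^ ((b:ℝ) * -A) * (h:ℝ) ^ (-A) * ((u:ℝ) ^ ((a:ℝ) * -B) * (r:ℝ) ^ (-B))
      * ((u:ℝ) ^ ((b:ℝ) * -A) * (h:ℝ) ^ (-A) * ((v:ℝ) ^ ((a:ℝ) * -B) * (r:ℝ) ^ (-B)))
      = ((u:ℝ) ^ ((a:ℝ) * -B) * (u:ℝ) ^ ((b:ℝ) * -A)) * ((v:ℝ) ^ ((b:ℝ) * -A) * (v:ℝ) ^ ((a:ℝ) * -B))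
        * (((h:ℝ) ^ (-A) * (h:ℝ) ^ (-A)) * ((r:ℝ) ^ (-B) * (r:ℝ) ^ (-B))) from by ring]
  rw [← Real.rpow_add hu', ← Real.rpow_add hv', ← Real.rpow_add hh', ← Real.rpow_add hr']
  have hab0 : (a:ℝ) + b ≠ 0 := by positivity
  have hab2 : 2 * (a:ℝ) + 2 * b ≠ 0 := by positivity
  have e1 : (a:ℝ) * -B + (b:ℝ) * -A = -(sigR a b) := by
    rw [hA, hB, sigR]; field_simp; ring
  have e2 : (b:ℝ) * -A + (a:ℝ) * -B = -(sigR a b) := by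
    rw [hA, hB, sigR]; field_simp; ring
  have e3 : -A + -A = -(1 + (b:ℝ)/((a:ℝ)+b)) := by
    rw [hA]; field_simp; ring
  have e4 : -B + -B = -(1 + (a:ℝ)/((a:ℝ)+b)) := by
    rw [hB]; field_simp; ring
  rw [e1, e2, e3, e4]

lemma L2 {δ : ℝ} (hδ0 : 0 < δ) (hδ1 : δ ≤ 1) (F : Finset ℕ) :
    ∑ r ∈ F, (if 1 ≤ r then (r : ℝ) ^ (-(1 + δ)) else 0) ≤ 1 + 2 / δ := by
  have h := L1 hδ0 hδ1 (le_refl (0:ℝ)) F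
  rw [max_eq_left (by norm_num), Real.one_rpow, mul_one] at h
  refine le_trans (le_of_eq ?_) h
  refine Finset.sum_congr rfl fun r _ => ?_
  refine if_congr ⟨fun h1 => ⟨h1, by exact_mod_cast Nat.lt_of_lt_of_le Nat.zero_lt_one h1⟩,
    fun h1 => h1.1⟩ rfl rfl

lemma G2 {a b : ℕ} (ha : 0 < a) (hab : a < b) {Y : ℝ} (hY : 0 < Y) (S : Finset (ℕ × ℕ)) :
    ∑ p ∈ S, (if 1 ≤ p.1 ∧ 1 ≤ p.2 ∧ Y < (p.1 : ℝ) ^ (a : ℕ) * (p.2 : ℝ) ^ (b : ℕ)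
        then (p.1 : ℝ) ^ (-(1 + (b : ℝ) / (a + b))) * (p.2 : ℝ) ^ (-(1 + (a : ℝ) / (a + b))) else 0)
      ≤ (1 + 2 / ((a : ℝ) / (a + b))) * (1 + 2 / (((b : ℝ) - a) / b))
          * Y ^ (-((a : ℝ) / ((a + b) * b))) := by
  classical
  have hb : 0 < b := lt_trans ha hab
  have ha' : (0:ℝ) < a := by exact_mod_cast ha
  have hb' : (0:ℝ) < b := by exact_mod_cast hb
  have hab' : (a:ℝ) < b := by exact_mod_cast hab
  set α : ℝ := (a : ℝ) / (a + b) with hα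
  set δ₂ : ℝ := ((b : ℝ) - a) / b with hδ₂
  have hα0 : 0 < α := by positivity
  have hα1 : α ≤ 1 := by rw [hα, div_le_one (by positivity)]; linarith
  have hδ₂0 : 0 < δ₂ := div_pos (by linarith) hb'
  have hδ₂1 : δ₂ ≤ 1 := by rw [hδ₂, div_le_one hb']; linarith
  have hexp : -(α / (b:ℝ)) = -((a : ℝ) / ((a + b) * b)) := by rw [hα, div_div]
  set E : ℝ := Y ^ (-((a : ℝ) / ((a + b) * b))) with hE
  have hE0 : 0 < E := Real.rpow_pos_of_pos hY _
  set f : ℕ × ℕ → ℝ := fun p =>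
    if 1 ≤ p.1 ∧ 1 ≤ p.2 ∧ Y < (p.1 : ℝ) ^ (a : ℕ) * (p.2 : ℝ) ^ (b : ℕ)
      then (p.1 : ℝ) ^ (-(1 + (b : ℝ) / (a + b))) * (p.2 : ℝ) ^ (-(1 + (a : ℝ) / (a + b))) else 0
    with hf
  have hfnn : ∀ p, 0 ≤ f p := by
    intro p; rw [hf]; dsimp only
    split
    · positivity
    · exact le_rfl
  refine le_trans (Finset.sum_le_sum_of_subset_of_nonneg Finset.subset_product
    (fun p _ _ => hfnn p)) ?_
  rw [Finset.sum_product]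
  set H := S.image Prod.fst with hH
  set R := S.image Prod.snd with hR
  have inner : ∀ h ∈ H, ∑ r ∈ R, f (h, r)
      ≤ (1 + 2 / α) * E * (if 1 ≤ h then (h : ℝ) ^ (-(1 + δ₂)) else 0) := by
    intro h _
    by_cases hh : 1 ≤ h
    · have hh0 : (0:ℝ) < (h:ℝ) := by exact_mod_cast hh
      have hh1 : (1:ℝ) ≤ (h:ℝ) := by exact_mod_cast hh
      have hha : (0:ℝ) < (h:ℝ) ^ (a : ℕ) := by positivity
      set Z : ℝ := Y / (h:ℝ) ^ (a : ℕ) with hZ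
      have hZ0 : 0 < Z := by positivity
      set W : ℝ := Z ^ ((b:ℝ))⁻¹ with hW
      have hW0 : 0 < W := Real.rpow_pos_of_pos hZ0 _
      have hcond : ∀ r : ℕ, ((1 ≤ h ∧ 1 ≤ r ∧ Y < (h : ℝ) ^ (a : ℕ) * (r : ℝ) ^ (b : ℕ))
          ↔ (1 ≤ r ∧ W < (r : ℝ))) := by
        intro r
        constructor
        · rintro ⟨-, hr, hlt⟩
          refine ⟨hr, ?_⟩
          rw [hW]
          rw [Real.rpow_inv_lt_iff_of_pos hZ0.le (by positivity) hb']
          rw [Real.rpow_natCast]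
          rw [hZ, div_lt_iff₀ hha]
          calc Y < (h : ℝ) ^ (a : ℕ) * (r : ℝ) ^ (b : ℕ) := hlt
            _ = (r : ℝ) ^ (b : ℕ) * (h : ℝ) ^ (a : ℕ) := by ring
        · rintro ⟨hr, hlt⟩
          refine ⟨hh, hr, ?_⟩
          rw [hW, Real.rpow_inv_lt_iff_of_pos hZ0.le (by positivity) hb',
            Real.rpow_natCast, hZ, div_lt_iff₀ hha] at hlt
          calc Y < (r : ℝ) ^ (b : ℕ) * (h : ℝ) ^ (a : ℕ) := hlt
            _ = (h : ℝ) ^ (a : ℕ) * (r : ℝ) ^ (b : ℕ) := by ring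
      have step1 : ∑ r ∈ R, f (h, r)
          = (h : ℝ) ^ (-(1 + (b : ℝ) / (a + b)))
            * ∑ r ∈ R, (if 1 ≤ r ∧ W < (r : ℝ) then (r : ℝ) ^ (-(1 + α)) else 0) := by
        rw [Finset.mul_sum]
        refine Finset.sum_congr rfl fun r _ => ?_
        rw [hf]; dsimp only
        rw [if_congr (hcond r) rfl rfl, mul_ite, mul_zero]
      rw [step1, if_pos hh]
      have hL := L1 hα0 hα1 hW0.le R
      have hmax : (max 1 W) ^ (-α) ≤ W ^ (-α) :=
        Real.rpow_le_rpow_of_nonpos hW0 (le_max_right 1 W) (by linarith)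
      have hWval : W ^ (-α) = E * ((h:ℝ) ^ ((a:ℝ) * (α / b))) := by
        rw [hW, ← Real.rpow_mul hZ0.le]
        have : (b:ℝ)⁻¹ * (-α) = -(α / b) := by field_simp
        rw [this, hZ, div_eq_mul_inv, Real.mul_rpow hY.le (by positivity),
          hE, ← hexp, Real.inv_rpow hha.le,
          ← Real.rpow_natCast ((h:ℝ)) a, ← Real.rpow_mul hh0.le, ← Real.rpow_neg hh0.le]
        congr 2
        ring
      have hhe : (h : ℝ) ^ (-(1 + (b : ℝ) / (a + b))) * ((h:ℝ) ^ ((a:ℝ) * (α / b)))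
          = (h : ℝ) ^ (-(1 + δ₂)) := by
        rw [← Real.rpow_add hh0]
        congr 1
        rw [hα, hδ₂]
        field_simp
        ring
      have hhnn : (0:ℝ) ≤ (h : ℝ) ^ (-(1 + (b : ℝ) / (a + b))) := Real.rpow_nonneg hh0.le _
      calc (h : ℝ) ^ (-(1 + (b : ℝ) / (a + b)))
            * ∑ r ∈ R, (if 1 ≤ r ∧ W < (r : ℝ) then (r : ℝ) ^ (-(1 + α)) else 0)
          ≤ (h : ℝ) ^ (-(1 + (b : ℝ) / (a + b))) * ((1 + 2 / α) * (max 1 W) ^ (-α)) :=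
            mul_le_mul_of_nonneg_left hL hhnn
        _ ≤ (h : ℝ) ^ (-(1 + (b : ℝ) / (a + b))) * ((1 + 2 / α) * W ^ (-α)) := by
            refine mul_le_mul_of_nonneg_left (mul_le_mul_of_nonneg_left hmax (by positivity)) hhnn
        _ = (1 + 2 / α) * E * ((h : ℝ) ^ (-(1 + δ₂))) := by
            rw [hWval, ← hhe]; ring
    · have hz : ∀ r ∈ R, f (h, r) = 0 := by
        intro r _
        rw [hf]; dsimp only
        rw [if_neg (by tauto)]
      rw [Finset.sum_congr rfl hz, Finset.sum_const, smul_zero, if_neg hh, mul_zero]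
  calc ∑ h ∈ H, ∑ r ∈ R, f (h, r)
      ≤ ∑ h ∈ H, (1 + 2 / α) * E * (if 1 ≤ h then (h : ℝ) ^ (-(1 + δ₂)) else 0) :=
        Finset.sum_le_sum inner
    _ = (1 + 2 / α) * E * ∑ h ∈ H, (if 1 ≤ h then (h : ℝ) ^ (-(1 + δ₂)) else 0) := by
        rw [Finset.mul_sum]
    _ ≤ (1 + 2 / α) * E * (1 + 2 / δ₂) := by
        refine mul_le_mul_of_nonneg_left (L2 hδ₂0 hδ₂1 H) (by positivity)
    _ = (1 + 2 / α) * (1 + 2 / δ₂) * E := by ring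


noncomputable def Psi (a b : ℕ) (X : ℝ) (y : (ℕ × ℕ) × ℕ × ℕ) : ℝ :=
  if 1 ≤ y.1.1 ∧ 1 ≤ y.1.2 ∧ 1 ≤ y.2.1 ∧ 1 ≤ y.2.2 ∧
      X < (((y.1.2 ^ b * y.2.1) ^ a * (y.1.1 ^ a * y.2.2) ^ b : ℕ) : ℝ)
  then (y.1.1 : ℝ) ^ (-(sigR a b)) * (y.1.2 : ℝ) ^ (-(sigR a b)) *
       ((y.2.1 : ℝ) ^ (-(1 + (b:ℝ)/((a:ℝ)+b))) * (y.2.2 : ℝ) ^ (-(1 + (a:ℝ)/((a:ℝ)+b))))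
  else 0

lemma Psi_nonneg (a b : ℕ) (X : ℝ) (y : (ℕ × ℕ) × ℕ × ℕ) : 0 ≤ Psi a b X y := by
  rw [Psi]
  split
  · positivity
  · exact le_rfl

lemma quadbound {a b : ℕ} (ha : 0 < a) (hab : a < b) {X : ℝ} (hX : 0 < X)
    (S : Finset ((ℕ × ℕ) × ℕ × ℕ)) :
    ∑ y ∈ S, Psi a b X y
      ≤ 9 * ((1 + 2 / ((a : ℝ) / (a + b))) * (1 + 2 / (((b : ℝ) - a) / b)))
          * X ^ (-((a : ℝ) / ((a + b) * b))) := by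
  classical
  have hb : 0 < b := lt_trans ha hab
  have hb2 : 2 ≤ b := by omega
  have ha' : (0:ℝ) < a := by exact_mod_cast ha
  have hb' : (0:ℝ) < b := by exact_mod_cast hb
  have hab' : (a:ℝ) < b := by exact_mod_cast hab
  set CG : ℝ := (1 + 2 / ((a : ℝ) / (a + b))) * (1 + 2 / (((b : ℝ) - a) / b)) with hCG
  have hCG0 : 0 < CG := by
    rw [hCG]
    have h1 : (0:ℝ) < (a:ℝ)/(a+b) := by positivity
    have h2 : (0:ℝ) < ((b:ℝ)-a)/b := div_pos (by linarith) hb'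
    positivity
  set e : ℝ := -((a : ℝ) / ((a + b) * b)) with he
  set E : ℝ := X ^ e with hE
  have hE0 : 0 < E := Real.rpow_pos_of_pos hX _
  refine le_trans (Finset.sum_le_sum_of_subset_of_nonneg Finset.subset_product
    (fun y _ _ => Psi_nonneg a b X y)) ?_
  rw [Finset.sum_product]
  set S1 := S.image Prod.fst with hS1
  set S2 := S.image Prod.snd with hS2
  have inner : ∀ q ∈ S1, ∑ p ∈ S2, Psi a b X (q, p)
      ≤ CG * E * ((if 1 ≤ q.1 then (q.1 : ℝ) ^ (-(1 + (1:ℝ))) else 0)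
        * (if 1 ≤ q.2 then (q.2 : ℝ) ^ (-(1 + (1:ℝ))) else 0)) := by
    rintro ⟨u, v⟩ -
    by_cases huv : 1 ≤ u ∧ 1 ≤ v
    · obtain ⟨hu, hv⟩ := huv
      have hu0 : (0:ℝ) < u := by exact_mod_cast hu
      have hv0 : (0:ℝ) < v := by exact_mod_cast hv
      have hu1 : (1:ℝ) ≤ u := by exact_mod_cast hu
      have hv1 : (1:ℝ) ≤ v := by exact_mod_cast hv
      have huvp : (0:ℝ) < ((u:ℝ) * v) ^ (a * b : ℕ) := by positivity
      set Y : ℝ := X / ((u:ℝ) * v) ^ (a * b : ℕ) with hY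
      have hY0 : 0 < Y := by positivity
      have hcond : ∀ h r : ℕ,
          ((1 ≤ u ∧ 1 ≤ v ∧ 1 ≤ h ∧ 1 ≤ r ∧
              X < (((v ^ b * h) ^ a * (u ^ a * r) ^ b : ℕ) : ℝ))
            ↔ (1 ≤ h ∧ 1 ≤ r ∧ Y < (h : ℝ) ^ (a : ℕ) * (r : ℝ) ^ (b : ℕ))) := by
        intro h r
        have hcast : (((v ^ b * h) ^ a * (u ^ a * r) ^ b : ℕ) : ℝ)
            = ((u:ℝ) * v) ^ (a * b : ℕ) * ((h : ℝ) ^ (a : ℕ) * (r : ℝ) ^ (b : ℕ)) := by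
          push_cast
          ring
        constructor
        · rintro ⟨-, -, hh, hr, hlt⟩
          refine ⟨hh, hr, ?_⟩
          rw [hY, div_lt_iff₀ huvp]
          rw [hcast] at hlt
          linarith [hlt]
        · rintro ⟨hh, hr, hlt⟩
          rw [hY, div_lt_iff₀ huvp] at hlt
          refine ⟨hu, hv, hh, hr, ?_⟩
          rw [hcast]
          linarith [hlt]
      have step1 : ∑ p ∈ S2, Psi a b X ((u, v), p)
          = (u : ℝ) ^ (-(sigR a b)) * (v : ℝ) ^ (-(sigR a b))
            * ∑ p ∈ S2, (if 1 ≤ p.1 ∧ 1 ≤ p.2 ∧ Y < (p.1 : ℝ) ^ (a : ℕ) * (p.2 : ℝ) ^ (b : ℕ)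
                then (p.1 : ℝ) ^ (-(1 + (b : ℝ) / (a + b))) * (p.2 : ℝ) ^ (-(1 + (a : ℝ) / (a + b)))
                else 0) := by
        rw [Finset.mul_sum]
        refine Finset.sum_congr rfl fun p _ => ?_
        rw [Psi]
        rw [if_congr (hcond p.1 p.2) rfl rfl, mul_ite, mul_zero]
      rw [step1]
      have hG := G2 ha hab hY0 S2
      have huvnn : (0:ℝ) ≤ (u : ℝ) ^ (-(sigR a b)) * (v : ℝ) ^ (-(sigR a b)) := by positivity
      refine le_trans (mul_le_mul_of_nonneg_left hG huvnn) ?_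
      -- now: u^{-σ} v^{-σ} * (CG * Y^e) ≤ CG * E * (u^{-2} v^{-2} ites)
      have hYe : Y ^ e = E * ((u:ℝ) ^ ((a:ℝ)^2/((a:ℝ)+b)) * (v:ℝ) ^ ((a:ℝ)^2/((a:ℝ)+b))) := by
        rw [hY, div_eq_mul_inv, Real.mul_rpow hX.le (by positivity), hE,
          Real.inv_rpow huvp.le, ← Real.rpow_natCast ((u:ℝ) * v) (a*b),
          ← Real.rpow_mul (by positivity), ← Real.rpow_neg (by positivity),
          Real.mul_rpow hu0.le hv0.le]
        have : -((a * b : ℕ) * e) = (a:ℝ)^2/((a:ℝ)+b) := by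
          rw [he]
          push_cast
          field_simp
        rw [this]
      have hsig : ∀ w : ℕ, (1:ℝ) ≤ (w:ℝ) →
          (w : ℝ) ^ (-(sigR a b)) * (w:ℝ) ^ ((a:ℝ)^2/((a:ℝ)+b)) ≤ (w:ℝ) ^ (-(1 + (1:ℝ))) := by
        intro w hw
        rw [← Real.rpow_add (by linarith)]
        refine Real.rpow_le_rpow_of_exponent_le hw ?_
        rw [sigR]
        have hbb : -((b:ℝ)) ≤ -(1+(1:ℝ)) := by
          have : (2:ℝ) ≤ (b:ℝ) := by exact_mod_cast hb2
          linarith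
        refine le_trans (le_of_eq ?_) hbb
        field_simp
        ring
      calc (u : ℝ) ^ (-(sigR a b)) * (v : ℝ) ^ (-(sigR a b)) * (CG * Y ^ e)
          = CG * E * (((u : ℝ) ^ (-(sigR a b)) * (u:ℝ) ^ ((a:ℝ)^2/((a:ℝ)+b)))
              * ((v : ℝ) ^ (-(sigR a b)) * (v:ℝ) ^ ((a:ℝ)^2/((a:ℝ)+b)))) := by
            rw [hYe]; ring
        _ ≤ CG * E * ((u : ℝ) ^ (-(1 + (1:ℝ))) * (v : ℝ) ^ (-(1 + (1:ℝ)))) := by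
            refine mul_le_mul_of_nonneg_left ?_ (by positivity)
            refine mul_le_mul (hsig u hu1) (hsig v hv1) (by positivity) (by positivity)
        _ = CG * E * ((if 1 ≤ u then (u : ℝ) ^ (-(1 + (1:ℝ))) else 0)
              * (if 1 ≤ v then (v : ℝ) ^ (-(1 + (1:ℝ))) else 0)) := by
            rw [if_pos hu, if_pos hv]
    · have hz : ∀ p ∈ S2, Psi a b X ((u, v), p) = 0 := by
        intro p _
        rw [Psi, if_neg (by tauto)]
      rw [Finset.sum_congr rfl hz, Finset.sum_const, smul_zero]
      have : (if 1 ≤ u then (u : ℝ) ^ (-(1 + (1:ℝ))) else 0)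
          * (if 1 ≤ v then (v : ℝ) ^ (-(1 + (1:ℝ))) else 0) ≥ 0 := by positivity
      positivity
  refine le_trans (Finset.sum_le_sum inner) ?_
  rw [← Finset.mul_sum]
  have hsplit : ∑ q ∈ S1, ((if 1 ≤ q.1 then (q.1 : ℝ) ^ (-(1 + (1:ℝ))) else 0)
        * (if 1 ≤ q.2 then (q.2 : ℝ) ^ (-(1 + (1:ℝ))) else 0)) ≤ 3 * 3 := by
    refine le_trans (Finset.sum_le_sum_of_subset_of_nonneg Finset.subset_product
      (fun q _ _ => by positivity)) ?_
    rw [Finset.sum_product]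
    dsimp only
    rw [← Finset.sum_mul_sum _ _ (fun u : ℕ => if 1 ≤ u then (u : ℝ) ^ (-(1 + (1:ℝ))) else 0) (fun u : ℕ => if 1 ≤ u then (u : ℝ) ^ (-(1 + (1:ℝ))) else 0)]
    have hnn2 : (0:ℝ) ≤ ∑ v ∈ S1.image Prod.snd, (if 1 ≤ v then (v : ℝ) ^ (-(1 + (1:ℝ))) else 0) :=
      Finset.sum_nonneg fun i _ => by positivity
    exact mul_le_mul (le_trans (L2 one_pos le_rfl _) (by norm_num))
      (le_trans (L2 one_pos le_rfl _) (by norm_num)) hnn2 (by norm_num)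
  refine le_trans (mul_le_mul_of_nonneg_left hsplit (by positivity)) (le_of_eq (by ring))
def PP (a b : ℕ) (q : (ℕ × ℕ) × ℕ × ℕ) : Prop :=
  ∃ y : (ℕ × ℕ) × ℕ × ℕ, 0 < y.1.1 ∧ 0 < y.1.2 ∧ 0 < y.2.1 ∧ 0 < y.2.2 ∧
    q.1.1 = y.1.2 ^ b * y.2.1 ∧ q.1.2 = y.1.1 ^ a * y.2.2 ∧
    q.2.1 = y.1.1 ^ b * y.2.1 ∧ q.2.2 = y.1.2 ^ a * y.2.2

noncomputable def ee (a b : ℕ) (q : (ℕ × ℕ) × ℕ × ℕ) : (ℕ × ℕ) × ℕ × ℕ :=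
  @dite _ (PP a b q) (Classical.dec _) (fun h => h.choose) (fun _ => ((0, 0), 0, 0))

lemma ee_spec {a b : ℕ} {q : (ℕ × ℕ) × ℕ × ℕ} (h : PP a b q) :
    0 < (ee a b q).1.1 ∧ 0 < (ee a b q).1.2 ∧ 0 < (ee a b q).2.1 ∧ 0 < (ee a b q).2.2 ∧
    q.1.1 = (ee a b q).1.2 ^ b * (ee a b q).2.1 ∧ q.1.2 = (ee a b q).1.1 ^ a * (ee a b q).2.2 ∧
    q.2.1 = (ee a b q).1.1 ^ b * (ee a b q).2.1 ∧ q.2.2 = (ee a b q).1.2 ^ a * (ee a b q).2.2 := by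
  rw [ee, dif_pos h]
  exact h.choose_spec

theorem g_sq_tail (a b : ℕ) (ha : 0 < a) (hab : a < b) (hcop : Nat.Coprime a b) :
    ∃ C : ℝ, 0 < C ∧ ∀ X : ℝ, 2 < X →
      ∑' n : ℕ, (if X < (n : ℝ) then (g a b n) ^ 2 else 0) ≤
        C * X ^ (-((a : ℝ) / ((a + b) * b))) := by
  classical
  have hb : 0 < b := lt_trans ha hab
  have ha' : (0:ℝ) < a := by exact_mod_cast ha
  have hb' : (0:ℝ) < b := by exact_mod_cast hb
  have hab' : (a:ℝ) < b := by exact_mod_cast hab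
  set C : ℝ := 9 * ((1 + 2 / ((a : ℝ) / (a + b))) * (1 + 2 / (((b : ℝ) - a) / b))) with hC
  have hC0 : 0 < C := by
    have h1 : (0:ℝ) < (a:ℝ)/(a+b) := by positivity
    have h2 : (0:ℝ) < ((b:ℝ)-a)/b := div_pos (by linarith) hb'
    rw [hC]; positivity
  refine ⟨C, hC0, fun X hX => ?_⟩
  have hX0 : (0:ℝ) < X := by linarith
  have hRHS : (0:ℝ) ≤ C * X ^ (-((a : ℝ) / ((a + b) * b))) := by positivity
  refine tsum_le_of_sum_le' hRHS fun F => ?_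
  -- notation for the representation finset
  set Rn : ℕ → Finset (ℕ × ℕ) := fun n =>
    (Finset.Icc 1 n ×ˢ Finset.Icc 1 n).filter (fun p => p.1 ^ a * p.2 ^ b = n) with hRn
  have hmemRn : ∀ n, ∀ p ∈ Rn n, 0 < p.1 ∧ 0 < p.2 ∧ p.1 ^ a * p.2 ^ b = n := by
    intro n p hp
    rw [hRn] at hp
    simp only [Finset.mem_filter, Finset.mem_product, Finset.mem_Icc] at hp
    exact ⟨hp.1.1.1, hp.1.2.1, hp.2⟩
  have hPP : ∀ n, ∀ q ∈ Rn n ×ˢ Rn n, PP a b q := by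
    rintro n q hq
    rw [Finset.mem_product] at hq
    obtain ⟨h1, h2, h3⟩ := hmemRn n q.1 hq.1
    obtain ⟨h4, h5, h6⟩ := hmemRn n q.2 hq.2
    obtain ⟨u, v, h₁, r₁, hu, hv, hh₁, hr₁, e1, e2, e3, e4⟩ :=
      decomp ha hb hcop h1 h2 h4 h5 (by rw [h3, h6])
    exact ⟨((u, v), h₁, r₁), hu, hv, hh₁, hr₁, e1, e2, e3, e4⟩
  set Q : ℕ → Finset ((ℕ × ℕ) × ℕ × ℕ) := fun n => (Rn n ×ˢ Rn n).image (ee a b) with hQ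
  -- each n's contribution
  have stepA : ∀ n : ℕ, (if X < (n : ℝ) then (g a b n) ^ 2 else 0) ≤ ∑ y ∈ Q n, Psi a b X y := by
    intro n
    by_cases hn : X < (n : ℝ)
    · rw [if_pos hn]
      have hinj : ∀ q ∈ Rn n ×ˢ Rn n, ∀ q' ∈ Rn n ×ˢ Rn n, ee a b q = ee a b q' → q = q' := by
        intro q hq q' hq' heq
        obtain ⟨-, -, -, -, f1, f2, f3, f4⟩ := ee_spec (hPP n q hq)
        obtain ⟨-, -, -, -, g1, g2, g3, g4⟩ := ee_spec (hPP n q' hq')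
        rw [heq] at f1 f2 f3 f4
        have : q.1 = q'.1 := Prod.ext (by rw [f1, g1]) (by rw [f2, g2])
        have h2 : q.2 = q'.2 := Prod.ext (by rw [f3, g3]) (by rw [f4, g4])
        exact Prod.ext this h2
      have hgsum : g a b n = ∑ p ∈ Rn n, tt a b p := rfl
      have expand : (g a b n) ^ 2 = ∑ q ∈ Rn n ×ˢ Rn n, tt a b q.1 * tt a b q.2 := by
        rw [hgsum, sq, Finset.sum_mul_sum, ← Finset.sum_product']
      rw [expand, hQ]
      rw [Finset.sum_image hinj]
      refine le_of_eq (Finset.sum_congr rfl fun q hq => ?_)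
      obtain ⟨p1, p2, p3, p4, e1, e2, e3, e4⟩ := ee_spec (hPP n q hq)
      obtain ⟨hq11, hq12, hq1n⟩ := hmemRn n q.1 (Finset.mem_product.mp hq).1
      have hcondn : X < (((((ee a b q).1.2 ^ b * (ee a b q).2.1)) ^ a
          * (((ee a b q).1.1 ^ a * (ee a b q).2.2)) ^ b : ℕ) : ℝ) := by
        rw [← e1, ← e2]
        have : q.1.1 ^ a * q.1.2 ^ b = n := hq1n
        rw [this]
        exact hn
      have hval := value_lemma ha hb p1 p2 p3 p4
      rw [Psi, if_pos ⟨p1, p2, p3, p4, hcondn⟩]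
      have hq1 : q.1 = ((ee a b q).1.2 ^ b * (ee a b q).2.1, (ee a b q).1.1 ^ a * (ee a b q).2.2) :=
        Prod.ext e1 e2
      have hq2 : q.2 = ((ee a b q).1.1 ^ b * (ee a b q).2.1, (ee a b q).1.2 ^ a * (ee a b q).2.2) :=
        Prod.ext e3 e4
      rw [hq1, hq2]
      exact value_lemma ha hb p1 p2 p3 p4
    · rw [if_neg hn]
      exact Finset.sum_nonneg fun y _ => Psi_nonneg a b X y
  have hdisj : (↑F : Set ℕ).PairwiseDisjoint Q := by
    intro m _ n _ hmn
    have hvalQ : ∀ k : ℕ, ∀ y ∈ Q k, (y.1.2 ^ b * y.2.1) ^ a * (y.1.1 ^ a * y.2.2) ^ b = k := by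
      intro k y hy
      rw [hQ] at hy
      obtain ⟨q, hq, rfl⟩ := Finset.mem_image.mp hy
      obtain ⟨-, -, -, -, e1, e2, -, -⟩ := ee_spec (hPP k q hq)
      obtain ⟨-, -, hq1n⟩ := hmemRn k q.1 (Finset.mem_product.mp hq).1
      rw [← e1, ← e2, hq1n]
    simp only [Function.onFun]
    rw [Finset.disjoint_left]
    intro y hy1 hy2
    exact hmn (by rw [← hvalQ m y hy1, hvalQ n y hy2])
  calc ∑ n ∈ F, (if X < (n : ℝ) then (g a b n) ^ 2 else 0)
      ≤ ∑ n ∈ F, ∑ y ∈ Q n, Psi a b X y := Finset.sum_le_sum fun n _ => stepA n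
    _ = ∑ y ∈ F.biUnion Q, Psi a b X y := (Finset.sum_biUnion hdisj).symm
    _ ≤ C * X ^ (-((a : ℝ) / ((a + b) * b))) := by
        rw [hC, mul_assoc]
        exact le_trans (quadbound ha hab hX0 _) (le_of_eq (by ring))
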